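/- arXiv:0907.1051 — 2 statements merged into one kernel-verified Lean document; each statement's English description precedes it below -/
import Mathlib

section
/- If x_1 ≤ x_2 ≤ ... ≤ x_n are positive integers with ∑_{i=1}^n 1/x_i = 1, and u_1 = 1, u_{k+1} = u_k(u_k+1), then x_i ≤ (n - i + 1)·u_i for every i. -/
open Finset

private def syl (b : ℕ) : ℕ → ℕ
  | 0 => b
  | k + 1 => syl b k * (syl b k + 1)

private lemma syl_pos {b : ℕ} (hb : 1 ≤ b) : ∀ k, 0 < syl b k
  | 0 => hb
  | k + 1 => by
      have h := syl_pos hb k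
      simp only [syl]
      exact Nat.mul_pos h (Nat.succ_pos _)

private lemma syl_mono {b : ℕ} (hb : 1 ≤ b) : Monotone (syl b) := by
  apply monotone_nat_of_le_succ
  intro k
  have h := syl_pos hb k
  calc syl b k ≤ syl b k * (syl b k + 1) := Nat.le_mul_of_pos_right _ (by omega)
    _ = syl b (k+1) := rfl

private lemma syl_frac {b : ℕ} (hb : 1 ≤ b) (m : ℕ) :
    (1:ℚ)/(syl b m + 1) = 1/(syl b m) - 1/(syl b (m+1)) := by
  have h0 : 0 < syl b m := syl_pos hb m
  have h0' : (0:ℚ) < (syl b m : ℚ) := by exact_mod_cast h0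
  have h1 : (syl b (m+1) : ℚ) = (syl b m : ℚ) * ((syl b m : ℚ) + 1) := by
    show ((syl b m * (syl b m + 1) : ℕ) : ℚ) = _
    push_cast; ring
  rw [h1]
  field_simp
  ring

private lemma syl_prod {b : ℕ} (hb : 1 ≤ b) (k : ℕ) :
    (syl b k : ℚ) = (b : ℚ) * ∏ m ∈ range k, ((syl b m : ℚ) + 1) := by
  induction k with
  | zero => simp [syl]
  | succ k IH =>
    rw [prod_range_succ, ← mul_assoc, ← IH]
    show ((syl b k * (syl b k + 1) : ℕ) : ℚ) = _
    push_cast; ring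

private lemma syl_tel {b : ℕ} (hb : 1 ≤ b) (k : ℕ) :
    ∀ j, j ≤ k → ∑ i ∈ range j, (1:ℚ)/(syl b (k - 1 - i) + 1)
      = 1/(syl b (k - j)) - 1/(syl b k) := by
  intro j
  induction j with
  | zero => simp
  | succ j IHj =>
    intro hj
    rw [sum_range_succ, IHj (by omega)]
    have hm1 : k - j = (k - 1 - j) + 1 := by omega
    have hm2 : k - (j+1) = k - 1 - j := by omega
    rw [hm1, hm2, syl_frac hb (k - 1 - j)]
    ring

private lemma sum_reflect_split (f : ℕ → ℚ) (k : ℕ) :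
    ∀ j, j ≤ k → ∑ i ∈ range j, f (k - 1 - i) + ∑ i ∈ range (k - j), f i
      = ∑ i ∈ range k, f i := by
  intro j
  induction j with
  | zero => simp
  | succ j IHj =>
    intro hj
    have h := IHj (by omega)
    have e : k - j = (k - (j+1)) + 1 := by omega
    rw [e, sum_range_succ] at h
    rw [sum_range_succ]
    have e2 : k - 1 - j = k - (j+1) := by omega
    rw [e2]
    linarith


private lemma lemP : ∀ (k : ℕ) (y β : ℕ → ℚ),
    (∀ i, i < k → 0 < y i) → (∀ i, i < k → 0 < β i) →
    (∀ i j, i ≤ j → j < k → y i ≤ y j) →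
    (∀ i j, i ≤ j → j < k → β i ≤ β j) →
    (∀ j, j ≤ k → ∑ i ∈ range j, β i ≤ ∑ i ∈ range j, y i) →
    ∏ i ∈ range k, β i ≤ ∏ i ∈ range k, y i := by
  intro k
  induction k with
  | zero => intro y β _ _ _ _ _; simp
  | succ k IH =>
    intro y β hy hβ hmy hmβ hdom
    have hyk : 0 < y k := hy k (by omega)
    by_cases hcase : β k ≤ y k
    · -- easy case: drop last
      have h1 := IH y β (fun i hi => hy i (by omega)) (fun i hi => hβ i (by omega))
        (fun i j hij hj => hmy i j hij (by omega)) (fun i j hij hj => hmβ i j hij (by omega))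
        (fun j hj => hdom j (by omega))
      rw [prod_range_succ, prod_range_succ]
      have hβk : (0:ℚ) ≤ β k := le_of_lt (hβ k (by omega))
      have hys : (0:ℚ) ≤ ∏ i ∈ range k, y i :=
        le_of_lt (prod_pos (fun i hi => hy i (by have := mem_range.mp hi; omega)))
      exact mul_le_mul h1 hcase hβk hys
    · push_neg at hcase  -- y k < β k
      have hβ0 : β 0 ≤ y k := by
        have h := hdom 1 (by omega)
        simp only [sum_range_one] at h
        exact le_trans h (hmy 0 k (by omega) (by omega))
      set m := Nat.findGreatest (fun i => β i ≤ y k) k with hmdef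
      have hmP : β m ≤ y k := Nat.findGreatest_spec (P := fun i => β i ≤ y k) (Nat.zero_le k) hβ0
      have hmle : m ≤ k := Nat.findGreatest_le k
      have hmk : m < k := by
        rcases Nat.lt_or_ge m k with h | h
        · exact h
        · exfalso; have : m = k := by omega
          rw [this] at hmP; exact absurd hmP (not_le.mpr hcase)
      have hmgt : ∀ i, m < i → i ≤ k → y k < β i := by
        intro i h1 h2
        have := Nat.findGreatest_is_greatest (P := fun i => β i ≤ y k) (n := k) h1 h2
        exact lt_of_not_ge this
      set B : ℚ := β m + β (m+1) - y k with hBdef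
      have hm1k : m + 1 ≤ k := by omega
      have hβm1 : y k < β (m+1) := hmgt (m+1) (by omega) hm1k
      have hBge : β m ≤ B := by rw [hBdef]; linarith
      have hBle : B ≤ β (m+1) := by rw [hBdef]; linarith
      have hBpos : 0 < B := lt_of_lt_of_le (hβ m (by omega)) hBge
      set β' : ℕ → ℚ := fun i => if i < m then β i else if i = m then B else β (i+1)
        with hβ'def
      -- basic evals
      have hβ'lt : ∀ i, i < m → β' i = β i := by
        intro i hi; simp only [hβ'def]; rw [if_pos hi]
      have hβ'm : β' m = B := by
        simp [hβ'def]
      have hβ'gt : ∀ i, m < i → β' i = β (i+1) := by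
        intro i hi; simp only [hβ'def]; rw [if_neg (by omega), if_neg (by omega)]
      -- positivity
      have hβ'pos : ∀ i, i < k → 0 < β' i := by
        intro i hi
        rcases Nat.lt_trichotomy i m with h | h | h
        · rw [hβ'lt i h]; exact hβ i (by omega)
        · rw [h, hβ'm]; exact hBpos
        · rw [hβ'gt i h]; exact hβ (i+1) (by omega)
      -- monotonicity
      have hβ'mono : ∀ i j, i ≤ j → j < k → β' i ≤ β' j := by
        intro i j hij hjk
        rcases Nat.lt_trichotomy j m with hj | hj | hj
        · rw [hβ'lt i (by omega), hβ'lt j hj]; exact hmβ i j hij (by omega)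
        · rcases Nat.lt_or_ge i m with hi | hi
          · rw [hβ'lt i hi, hj, hβ'm]
            exact le_trans (hmβ i m (by omega) (by omega)) hBge
          · have : i = j := by omega
            rw [this]
        · rcases Nat.lt_trichotomy i m with hi | hi | hi
          · rw [hβ'lt i hi, hβ'gt j hj]
            exact hmβ i (j+1) (by omega) (by omega)
          · rw [hi, hβ'm, hβ'gt j hj]
            exact le_trans hBle (hmβ (m+1) (j+1) (by omega) (by omega))
          · rw [hβ'gt i hi, hβ'gt j hj]
            exact hmβ (i+1) (j+1) (by omega) (by omega)
      -- partial sums of β' below m agree with β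
      have hsumlow : ∀ j, j ≤ m → ∑ i ∈ range j, β' i = ∑ i ∈ range j, β i := by
        intro j hj
        apply sum_congr rfl
        intro i hi
        exact hβ'lt i (by have := mem_range.mp hi; omega)
      -- partial sums above m
      have hsum' : ∀ j, m + 1 ≤ j → j ≤ k →
          ∑ i ∈ range j, β' i = ∑ i ∈ range (j+1), β i - y k := by
        intro j hj1
        induction j, hj1 using Nat.le_induction with
        | base =>
          intro _
          rw [sum_range_succ, hsumlow m le_rfl, hβ'm]
          rw [sum_range_succ, sum_range_succ]
          rw [hBdef]; ring
        | succ j hj IHj =>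
          intro hjk
          rw [sum_range_succ, IHj (by omega), hβ'gt j (by omega)]
          have h2 := sum_range_succ β (j+1)
          rw [h2]
          ring
      -- product identity
      have hprod' : ∀ j, m + 1 ≤ j → j ≤ k →
          (∏ i ∈ range j, β' i) * (β m * β (m+1)) = (∏ i ∈ range (j+1), β i) * B := by
        intro j hj1
        induction j, hj1 using Nat.le_induction with
        | base =>
          intro _
          have hplow : ∏ i ∈ range m, β' i = ∏ i ∈ range m, β i := by
            apply prod_congr rfl
            intro i hi
            exact hβ'lt i (mem_range.mp hi)
          rw [prod_range_succ, hplow, hβ'm]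
          rw [prod_range_succ, prod_range_succ]
          ring
        | succ j hj IHj =>
          intro hjk
          rw [prod_range_succ, hβ'gt j (by omega)]
          rw [prod_range_succ (f := β)]
          have h := IHj (by omega)
          calc (∏ i ∈ range j, β' i) * β (j+1) * (β m * β (m+1))
              = ((∏ i ∈ range j, β' i) * (β m * β (m+1))) * β (j+1) := by ring
            _ = (∏ i ∈ range (j+1), β i) * B * β (j+1) := by rw [h]
            _ = (∏ i ∈ range (j+1), β i) * β (j+1) * B := by ring
      -- domination for β'
      have hdom' : ∀ j, j ≤ k → ∑ i ∈ range j, β' i ≤ ∑ i ∈ range j, y i := by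
        intro j hjk
        rcases Nat.lt_or_ge j (m+1) with hj | hj
        · rw [hsumlow j (by omega)]; exact hdom j (by omega)
        · rw [hsum' j hj hjk]
          have hA := hdom (k+1) le_rfl
          have hsplit1 : ∑ i ∈ range j, y i + ∑ i ∈ Ico j (k+1), y i
              = ∑ i ∈ range (k+1), y i := by
            simp only [range_eq_Ico]
            exact sum_Ico_consecutive _ (by omega) (by omega)
          have hsplit2 : ∑ i ∈ range (j+1), β i + ∑ i ∈ Ico (j+1) (k+1), β i
              = ∑ i ∈ range (k+1), β i := by
            simp only [range_eq_Ico]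
            exact sum_Ico_consecutive _ (by omega) (by omega)
          have hub : ∑ i ∈ Ico j (k+1), y i ≤ (k+1-j) • y k := by
            have := Finset.sum_le_card_nsmul (Ico j (k+1)) y (y k)
              (fun i hi => hmy i k (by have := mem_Ico.mp hi; omega) (by omega))
            rwa [Nat.card_Ico] at this
          have hlb : (k-j) • y k ≤ ∑ i ∈ Ico (j+1) (k+1), β i := by
            have := Finset.card_nsmul_le_sum (Ico (j+1) (k+1)) β (y k)
              (fun i hi => le_of_lt (hmgt i (by have := mem_Ico.mp hi; omega)
                (by have := mem_Ico.mp hi; omega)))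
            rwa [Nat.card_Ico, show k+1-(j+1) = k-j by omega] at this
          have hc : (↑(k+1-j) : ℚ) = (↑(k-j) : ℚ) + 1 := by
            rw [show k+1-j = (k-j)+1 by omega]; push_cast; ring
          rw [nsmul_eq_mul] at hub hlb
          rw [hc] at hub
          linarith
      -- apply IH
      have hfin := IH y β' (fun i hi => hy i (by omega)) hβ'pos
        (fun i j hij hj => hmy i j hij (by omega)) hβ'mono hdom'
      -- conclude
      have hid := hprod' k (by omega) le_rfl
      have hkey : β m * β (m+1) ≤ B * y k := by nlinarith [hmP, hβm1]
      have hprodypos : (0:ℚ) < ∏ i ∈ range k, y i :=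
        prod_pos (fun i hi => hy i (by have := mem_range.mp hi; omega))
      have hprodβ'pos : (0:ℚ) < ∏ i ∈ range k, β' i :=
        prod_pos (fun i hi => hβ'pos i (mem_range.mp hi))
      rw [prod_range_succ (f := y)]
      have hchain : (∏ i ∈ range (k+1), β i) * B ≤ ((∏ i ∈ range k, y i) * y k) * B := by
        calc (∏ i ∈ range (k+1), β i) * B
            = (∏ i ∈ range k, β' i) * (β m * β (m+1)) := hid.symm
          _ ≤ (∏ i ∈ range k, β' i) * (B * y k) := by
              exact mul_le_mul_of_nonneg_left hkey (le_of_lt hprodβ'pos)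
          _ = ((∏ i ∈ range k, β' i) * y k) * B := by ring
          _ ≤ ((∏ i ∈ range k, y i) * y k) * B := by
              apply mul_le_mul_of_nonneg_right _ (le_of_lt hBpos)
              exact mul_le_mul_of_nonneg_right hfin (le_of_lt hyk)
      exact le_of_mul_le_mul_right hchain hBpos

private lemma curtiss (b : ℕ) (hb : 1 ≤ b) (g : ℕ → ℕ) (hg : ∀ i, 1 ≤ g i)
    (hgm : ∀ i j, i ≤ j → g i ≤ g j) :
    ∀ k, (∑ i ∈ range k, (1:ℚ)/(g i)) < 1/b →
      (1:ℚ)/(syl b k) ≤ 1/b - ∑ i ∈ range k, (1:ℚ)/(g i) := by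
  intro k
  induction k using Nat.strong_induction_on with
  | _ k IH =>
    intro hS
    by_contra hcon
    push_neg at hcon
    set S : ℚ := ∑ i ∈ range k, (1:ℚ)/(g i) with hSdef
    -- positivity facts
    have hgpos : ∀ i, (0:ℚ) < (g i : ℚ) := by
      intro i; exact_mod_cast hg i
    have hbpos : (0:ℚ) < (b:ℚ) := by exact_mod_cast hb
    have hsylpos : ∀ m, (0:ℚ) < (syl b m : ℚ) := by
      intro m; exact_mod_cast syl_pos hb m
    have hterm_pos : ∀ i, (0:ℚ) < 1/(g i : ℚ) := fun i => one_div_pos.mpr (hgpos i)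
    have hterm_nonneg : ∀ i ∈ range k, (0:ℚ) ≤ 1/(g i : ℚ) :=
      fun i _ => le_of_lt (hterm_pos i)
    -- heads are < 1/b
    have hhead : ∀ m, m ≤ k → (∑ i ∈ range m, (1:ℚ)/(g i)) ≤ S := by
      intro m hm
      rw [hSdef]
      apply sum_le_sum_of_subset_of_nonneg (range_subset_range.mpr hm)
      intro i hi _; exact le_of_lt (hterm_pos i)
    -- define y and β
    set y : ℕ → ℚ := fun i => (1:ℚ)/(g (k - 1 - i)) with hydef
    set β : ℕ → ℚ := fun i => (1:ℚ)/(syl b (k - 1 - i) + 1) with hβdef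
    have hsylp1 : ∀ m, (0:ℚ) < (syl b m : ℚ) + 1 := fun m => by positivity
    have hy_pos : ∀ i, i < k → 0 < y i := fun i _ => hterm_pos _
    have hβ_pos : ∀ i, i < k → 0 < β i := fun i _ => by
      simp only [hβdef]; positivity
    have hy_mono : ∀ i j, i ≤ j → j < k → y i ≤ y j := by
      intro i j hij hj
      simp only [hydef]
      apply one_div_le_one_div_of_le (hgpos _)
      exact_mod_cast hgm (k-1-j) (k-1-i) (by omega)
    have hβ_mono : ∀ i j, i ≤ j → j < k → β i ≤ β j := by
      intro i j hij hj
      simp only [hβdef]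
      apply one_div_le_one_div_of_le (hsylp1 _)
      have := syl_mono hb (show k-1-j ≤ k-1-i by omega)
      push_cast
      exact_mod_cast Nat.add_le_add_right this 1
    -- domination
    have hdom : ∀ j, j ≤ k → ∑ i ∈ range j, β i ≤ ∑ i ∈ range j, y i := by
      intro j hj
      have hT : ∑ i ∈ range j, β i = 1/(syl b (k-j)) - 1/(syl b k) := syl_tel hb k j hj
      have hY : ∑ i ∈ range j, y i = S - ∑ i ∈ range (k-j), (1:ℚ)/(g i) := by
        have := sum_reflect_split (fun t => (1:ℚ)/(g t)) k j hj
        simp only [hydef]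
        linarith [this]
      rw [hT, hY]
      rcases Nat.eq_zero_or_pos j with hj0 | hjpos
      · subst hj0
        simp only [Nat.sub_zero] at hT hY ⊢
        rw [← hSdef]
        simp
      · have hkj : k - j < k := by omega
        have hHlt : (∑ i ∈ range (k-j), (1:ℚ)/(g i)) < 1/b :=
          lt_of_le_of_lt (hhead (k-j) (by omega)) hS
        have hIH := IH (k-j) hkj hHlt
        -- 1/syl b (k-j) ≤ 1/b - H
        -- hcon : 1/b - S < 1/syl b k
        linarith
    have hPP := lemP k y β hy_pos hβ_pos hy_mono hβ_mono hdom
    -- compute the two products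
    have hprody : ∏ i ∈ range k, y i = (∏ i ∈ range k, ((g i : ℚ)))⁻¹ := by
      simp only [hydef]
      rw [prod_range_reflect (fun i => (1:ℚ)/(g i)) k]
      rw [← prod_inv_distrib]
      simp [one_div]
    have hprodβ : ∏ i ∈ range k, β i = (b:ℚ) / (syl b k) := by
      simp only [hβdef]
      rw [prod_range_reflect (fun m => (1:ℚ)/(syl b m + 1)) k]
      have hne : (∏ m ∈ range k, ((syl b m : ℚ) + 1)) ≠ 0 :=
        ne_of_gt (prod_pos (fun m _ => hsylp1 m))
      rw [eq_div_iff (ne_of_gt (hsylpos k)), syl_prod hb k]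
      simp only [one_div]
      rw [prod_inv_distrib]
      rw [mul_comm (b:ℚ), ← mul_assoc, inv_mul_cancel₀ hne, one_mul]
    -- products comparison gives b * Pq ≤ syl b k
    set Pq : ℚ := ∏ i ∈ range k, ((g i : ℚ)) with hPqdef
    have hPqpos : 0 < Pq := prod_pos (fun i _ => hgpos i)
    have hbP : (b:ℚ) * Pq ≤ (syl b k : ℚ) := by
      rw [hprodβ, hprody] at hPP
      have h1 : (b:ℚ) / (syl b k) ≤ 1 / Pq := by rw [one_div]; exact hPP
      rw [div_le_div_iff₀ (hsylpos k) hPqpos] at h1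
      linarith
    have hPnat : Pq = ((∏ i ∈ range k, g i : ℕ) : ℚ) := by
      rw [hPqdef]; push_cast; rfl
    -- granularity
    set Qn : ℕ := b * ∑ i ∈ range k, ∏ j ∈ (range k).erase i, g j with hQdef
    have hSQ : S * ((b:ℚ) * Pq) = (Qn : ℚ) := by
      rw [hSdef, sum_mul, hQdef]
      push_cast
      rw [mul_sum]
      apply sum_congr rfl
      intro i hi
      have h := Finset.mul_prod_erase (range k) (fun j => ((g j : ℕ) : ℚ)) hi
      rw [hPqdef, ← h]
      have : (g i : ℚ) ≠ 0 := ne_of_gt (hgpos i)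
      field_simp
    have hPb : (1:ℚ)/b * ((b:ℚ)*Pq) = Pq := by field_simp
    have hgap : ((1:ℚ)/b - S) * ((b:ℚ)*Pq) = Pq - Qn := by rw [sub_mul, hPb, hSQ]
    have hgap_pos : (0:ℚ) < 1/b - S := by linarith
    have hbPq : (0:ℚ) < (b:ℚ)*Pq := by positivity
    have hQltP : (Qn:ℚ) < Pq := by nlinarith
    have hQltPnat : Qn < ∏ i ∈ range k, g i := by
      rw [hPnat] at hQltP; exact_mod_cast hQltP
    have h1le : (1:ℚ) ≤ Pq - Qn := by
      have h3 : Qn + 1 ≤ ∏ i ∈ range k, g i := hQltPnat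
      have h4 : ((Qn:ℚ) + 1) ≤ ((∏ i ∈ range k, g i : ℕ) : ℚ) := by exact_mod_cast h3
      rw [← hPnat] at h4
      linarith
    have hfinal : (1:ℚ)/(syl b k) ≤ 1/b - S := by
      have h2 : (1:ℚ)/b - S = (Pq - Qn)/((b:ℚ)*Pq) := by
        rw [eq_div_iff (ne_of_gt hbPq)]; exact hgap
      rw [h2]
      calc (1:ℚ)/(syl b k) ≤ 1/((b:ℚ)*Pq) := one_div_le_one_div_of_le hbPq hbP
        _ ≤ (Pq - Qn)/((b:ℚ)*Pq) := (div_le_div_iff_of_pos_right hbPq).mpr h1le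
    exact absurd hfinal (not_le.mpr hcon)

/-- If `x 0 ≤ ... ≤ x (n-1)` are positive integers with `∑ 1/(x i) = 1`, and
`u 1 = 1`, `u (k+1) = u k * (u k + 1)`, then `x i ≤ (n - i) * u (i+1)`
(the `i`-th term, 1-indexed as position `i+1`, is at most `(n - (i+1) + 1) * u (i+1)`). -/
theorem stmt2 (u : ℕ → ℕ) (hu1 : u 1 = 1)
    (hurec : ∀ k, 1 ≤ k → u (k + 1) = u k * (u k + 1))
    (n : ℕ) (x : Fin n → ℕ) (hpos : ∀ i, 0 < x i)
    (hmono : Monotone x)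
    (hsum : ∑ i, (1 : ℚ) / (x i) = 1) :
    ∀ i : Fin n, x i ≤ (n - (i : ℕ)) * u ((i : ℕ) + 1) := by
  -- syl 1 agrees with u (shifted)
  have hsylu : ∀ k, syl 1 k = u (k+1) := by
    intro k
    induction k with
    | zero => simp only [syl]; rw [hu1]
    | succ k IH => simp only [syl]; rw [IH, hurec (k+1) (by omega)]
  intro i
  have hn : 0 < n := i.pos
  -- extend x to ℕ
  set g : ℕ → ℕ := fun j => x ⟨min j (n-1), by omega⟩ with hgdef
  have hgx : ∀ j : ℕ, j < n → ∀ (h : j < n), g j = x ⟨j, h⟩ := by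
    intro j hj h
    simp only [hgdef]
    congr 1
    exact Fin.ext (by simp; omega)
  have hg1 : ∀ j, 1 ≤ g j := fun j => hpos _
  have hgm : ∀ a c : ℕ, a ≤ c → g a ≤ g c := by
    intro a c hac
    simp only [hgdef]
    exact hmono (by simp [Fin.mk_le_mk]; omega)
  have hgpos : ∀ j, (0:ℚ) < (g j : ℚ) := by intro j; exact_mod_cast hg1 j
  -- total sum
  have htot : ∑ j ∈ range n, (1:ℚ)/(g j) = 1 := by
    have h1 : ∑ j ∈ range n, (1:ℚ)/(g j) = ∑ i : Fin n, (1:ℚ)/(x i) := by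
      rw [← Fin.sum_univ_eq_sum_range (fun j => (1:ℚ)/(g j)) n]
      apply Finset.sum_congr rfl
      intro j _
      rw [hgx j.val j.isLt j.isLt]
    rw [h1, hsum]
  set k : ℕ := i.val with hkdef
  have hkn : k < n := i.isLt
  -- split the total sum
  have hsplit : ∑ j ∈ range k, (1:ℚ)/(g j) + ∑ j ∈ Ico k n, (1:ℚ)/(g j) = 1 := by
    have h1 : ∑ j ∈ range k, (1:ℚ)/(g j) + ∑ j ∈ Ico k n, (1:ℚ)/(g j)
        = ∑ j ∈ range n, (1:ℚ)/(g j) := by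
      simp only [range_eq_Ico]
      exact sum_Ico_consecutive (fun j => (1:ℚ)/(g j)) (Nat.zero_le k) (le_of_lt hkn)
    rw [h1, htot]
  have htailpos : 0 < ∑ j ∈ Ico k n, (1:ℚ)/(g j) := by
    apply sum_pos (fun j _ => one_div_pos.mpr (hgpos j))
    exact ⟨k, mem_Ico.mpr ⟨le_rfl, hkn⟩⟩
  have hH : ∑ j ∈ range k, (1:ℚ)/(g j) < 1 := by linarith
  have hH1 : ∑ j ∈ range k, (1:ℚ)/(g j) < 1/((1:ℕ):ℚ) := by
    rw [show ((1:ℕ):ℚ) = 1 by norm_num, div_one]; exact hH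
  have hcurt := curtiss 1 le_rfl g hg1 hgm k hH1
  rw [show ((1:ℕ):ℚ) = 1 by norm_num, div_one] at hcurt
  -- 1/u(k+1) ≤ 1 - H = tail
  have hu : (1:ℚ)/(u (k+1)) ≤ ∑ j ∈ Ico k n, (1:ℚ)/(g j) := by
    rw [← hsylu k]
    linarith
  -- tail ≤ (n-k) * (1/x i)
  have hgk : g k = x i := by
    rw [hgx k hkn hkn]
  have htail_le : ∑ j ∈ Ico k n, (1:ℚ)/(g j) ≤ ((n - k : ℕ) : ℚ) * (1/(x i : ℚ)) := by
    have h := Finset.sum_le_card_nsmul (Ico k n) (fun j => (1:ℚ)/(g j)) (1/(x i : ℚ))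
      (fun j hj => by
        have hjk : k ≤ j := (mem_Ico.mp hj).1
        rw [← hgk]
        exact one_div_le_one_div_of_le (by rw [hgk]; exact_mod_cast hpos i)
          (by exact_mod_cast hgm k j hjk))
    rwa [Nat.card_Ico, nsmul_eq_mul] at h
  have hupos : (0:ℚ) < (u (k+1) : ℚ) := by
    rw [← hsylu k]; exact_mod_cast syl_pos le_rfl k
  have hxpos : (0:ℚ) < (x i : ℚ) := by exact_mod_cast hpos i
  -- combine
  have hkey : (1:ℚ)/(u (k+1)) ≤ ((n - k : ℕ) : ℚ) * (1/(x i : ℚ)) :=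
    le_trans hu htail_le
  rw [mul_one_div] at hkey
  rw [div_le_div_iff₀ hupos hxpos] at hkey
  have hfin : (x i : ℚ) ≤ (((n - k) * u (k+1) : ℕ) : ℚ) := by push_cast; linarith
  exact_mod_cast hfin
end

section
/- The only 5-tuples of positive integers x_1 ≤ x_2 ≤ x_3 ≤ x_4 ≤ x_5 with ∑_{i=1}^5 1/x_i = 1 and such that x_5/x_i is a perfect square for each i are (5,5,5,5,5) and (2,8,8,8,8). -/
set_option maxRecDepth 100000 in
private lemma egyBound : ∀ a ∈ Finset.Icc 2 5, ∀ b ∈ Finset.Icc a 8,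
    ∀ c ∈ Finset.Icc b (3*a*b/(a*b-a-b)),
    ∀ d ∈ Finset.Icc c (2*a*b*c/(a*b*c - (b*c+a*c+a*b))),
    (b*c*d+a*c*d+a*b*d+a*b*c) < a*b*c*d →
    (a*b*c*d - (b*c*d+a*c*d+a*b*d+a*b*c)) ∣ (a*b*c*d) →
    a*b*c*d/(a*b*c*d - (b*c*d+a*c*d+a*b*d+a*b*c)) ≤ 1806 := by decide

set_option maxRecDepth 100000 in
private lemma egyMain : ∀ a ∈ Finset.Icc 2 5, ∀ b ∈ Finset.Icc a 8,
    ∀ c ∈ Finset.Icc b (3*a*b/(a*b-a-b)),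
    ∀ d ∈ Finset.Icc c (2*a*b*c/(a*b*c - (b*c+a*c+a*b))),
    (b*c*d+a*c*d+a*b*d+a*b*c) < a*b*c*d →
    (a*b*c*d - (b*c*d+a*c*d+a*b*d+a*b*c)) ∣ (a*b*c*d) →
    (∀ x ∈ [a,b,c,d], ∃ k ∈ Finset.range 44,
      a*b*c*d/(a*b*c*d - (b*c*d+a*c*d+a*b*d+a*b*c)) = x*k^2) →
    ((a=5∧b=5∧c=5∧d=5∧a*b*c*d/(a*b*c*d - (b*c*d+a*c*d+a*b*d+a*b*c))=5) ∨
     (a=2∧b=8∧c=8∧d=8∧a*b*c*d/(a*b*c*d - (b*c*d+a*c*d+a*b*d+a*b*c))=8)) := by decide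

set_option maxHeartbeats 2000000 in
/-- The only 5-tuples of positive integers `x₁ ≤ x₂ ≤ x₃ ≤ x₄ ≤ x₅` with
`∑ 1/xᵢ = 1` such that `x₅ / xᵢ` is a perfect square for each `i`
are `(5,5,5,5,5)` and `(2,8,8,8,8)`. -/
theorem stmt4 (x₁ x₂ x₃ x₄ x₅ : ℕ) (h1 : 0 < x₁)
    (h12 : x₁ ≤ x₂) (h23 : x₂ ≤ x₃) (h34 : x₃ ≤ x₄) (h45 : x₄ ≤ x₅)
    (hsum : (1 : ℚ) / x₁ + 1 / x₂ + 1 / x₃ + 1 / x₄ + 1 / x₅ = 1)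
    (hsq1 : ∃ k : ℕ, x₅ = x₁ * k ^ 2)
    (hsq2 : ∃ k : ℕ, x₅ = x₂ * k ^ 2)
    (hsq3 : ∃ k : ℕ, x₅ = x₃ * k ^ 2)
    (hsq4 : ∃ k : ℕ, x₅ = x₄ * k ^ 2)
    (hsq5 : ∃ k : ℕ, x₅ = x₅ * k ^ 2) :
    (x₁ = 5 ∧ x₂ = 5 ∧ x₃ = 5 ∧ x₄ = 5 ∧ x₅ = 5) ∨
    (x₁ = 2 ∧ x₂ = 8 ∧ x₃ = 8 ∧ x₄ = 8 ∧ x₅ = 8) := by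
  have hx2 : 0 < x₂ := lt_of_lt_of_le h1 h12
  have hx3 : 0 < x₃ := lt_of_lt_of_le hx2 h23
  have hx4 : 0 < x₄ := lt_of_lt_of_le hx3 h34
  have hx5 : 0 < x₅ := lt_of_lt_of_le hx4 h45
  have q1 : (0:ℚ) < x₁ := by exact_mod_cast h1
  have q2 : (0:ℚ) < x₂ := by exact_mod_cast hx2
  have q3 : (0:ℚ) < x₃ := by exact_mod_cast hx3
  have q4 : (0:ℚ) < x₄ := by exact_mod_cast hx4
  have q5 : (0:ℚ) < x₅ := by exact_mod_cast hx5
  have q12 : (x₁:ℚ) ≤ x₂ := by exact_mod_cast h12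
  have q23 : (x₂:ℚ) ≤ x₃ := by exact_mod_cast h23
  have q34 : (x₃:ℚ) ≤ x₄ := by exact_mod_cast h34
  have q45 : (x₄:ℚ) ≤ x₅ := by exact_mod_cast h45
  have m2 : 1/(x₂:ℚ) ≤ 1/x₁ := one_div_le_one_div_of_le q1 q12
  have m3 : 1/(x₃:ℚ) ≤ 1/x₂ := one_div_le_one_div_of_le q2 q23
  have m4 : 1/(x₄:ℚ) ≤ 1/x₃ := one_div_le_one_div_of_le q3 q34
  have m5 : 1/(x₅:ℚ) ≤ 1/x₄ := one_div_le_one_div_of_le q4 q45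
  have p1 : (0:ℚ) < 1/x₁ := by positivity
  have p2 : (0:ℚ) < 1/x₂ := by positivity
  have p3 : (0:ℚ) < 1/x₃ := by positivity
  have p4 : (0:ℚ) < 1/x₄ := by positivity
  have p5 : (0:ℚ) < 1/x₅ := by positivity
  -- x₁ ≥ 2
  have h2le : 2 ≤ x₁ := by
    by_contra h
    have hx1 : x₁ = 1 := by omega
    rw [hx1] at hsum
    norm_num at hsum
    have i2 : (0:ℚ) < (x₂:ℚ)⁻¹ := by positivity
    have i3 : (0:ℚ) < (x₃:ℚ)⁻¹ := by positivity
    have i4 : (0:ℚ) < (x₄:ℚ)⁻¹ := by positivity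
    have i5 : (0:ℚ) < (x₅:ℚ)⁻¹ := by positivity
    linarith
  have q1' : (2:ℚ) ≤ x₁ := by exact_mod_cast h2le
  -- x₁ ≤ 5
  have hb1 : x₁ ≤ 5 := by
    have h5 : (1:ℚ) * x₁ ≤ 5 := by
      have : (1:ℚ) ≤ 5 * (1/x₁) := by linarith
      have := mul_le_mul_of_nonneg_right this (le_of_lt q1)
      have hc : (1/(x₁:ℚ)) * x₁ = 1 := one_div_mul_cancel (ne_of_gt q1)
      nlinarith
    have : (x₁:ℚ) ≤ 5 := by linarith
    exact_mod_cast this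
  -- x₂ ≤ 8
  have hb2 : x₂ ≤ 8 := by
    have h8 : (x₂:ℚ) ≤ 8 := by
      have hm : 1/(x₁:ℚ) ≤ 1/2 := by
        apply one_div_le_one_div_of_le; norm_num; exact q1'
      have h4 : (1:ℚ)/2 ≤ 4 * (1/x₂) := by linarith
      have := mul_le_mul_of_nonneg_right h4 (le_of_lt q2)
      have hc : (1/(x₂:ℚ)) * x₂ = 1 := one_div_mul_cancel (ne_of_gt q2)
      nlinarith
    exact_mod_cast h8
  -- level-2 numerator positive : x₁ + x₂ < x₁*x₂
  have hN2 : x₁ + x₂ < x₁*x₂ := by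
    have hpos : (0:ℚ) < 1 - 1/x₁ - 1/x₂ := by linarith
    have e1 : ((x₁:ℚ)*x₂)*(1 - 1/x₁ - 1/x₂) = x₁*x₂ - x₂ - x₁ := by
      field_simp
    have := mul_pos (mul_pos q1 q2) hpos
    rw [e1] at this
    have : (x₁:ℚ) + x₂ < x₁*x₂ := by linarith
    exact_mod_cast this
  have s1 : x₁ ≤ x₁*x₂ := le_of_lt (lt_of_le_of_lt (Nat.le_add_right x₁ x₂) hN2)
  have s2 : x₂ ≤ x₁*x₂ - x₁ := Nat.le_sub_of_add_le (by rw [Nat.add_comm]; exact hN2.le)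
  have hN2pos : 0 < x₁*x₂ - x₁ - x₂ :=
    Nat.sub_pos_of_lt (Nat.lt_sub_of_add_lt (by rw [Nat.add_comm]; exact hN2))
  -- x₃ bound
  have hq3 : x₃ * (x₁*x₂ - x₁ - x₂) ≤ 3*x₁*x₂ := by
    have h3 : 1 - 1/(x₁:ℚ) - 1/x₂ ≤ 3 * (1/x₃) := by linarith
    have := mul_le_mul_of_nonneg_left h3 (by positivity : (0:ℚ) ≤ x₁*x₂*x₃)
    have i1 : ((x₁:ℚ)*x₂*x₃)*(1 - 1/x₁ - 1/x₂) = x₃*(x₁*x₂ - x₁ - x₂) := by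
      field_simp; ring
    have i2 : ((x₁:ℚ)*x₂*x₃)*(3*(1/x₃)) = 3*x₁*x₂ := by
      field_simp
    have hq : (x₃:ℚ)*(x₁*x₂ - x₁ - x₂) ≤ 3*x₁*x₂ := by linarith
    have hc : ((x₁*x₂ - x₁ - x₂ : ℕ) : ℚ) = (x₁:ℚ)*x₂ - x₁ - x₂ := by
      rw [Nat.cast_sub s2, Nat.cast_sub s1]; push_cast; ring
    rw [← hc] at hq
    exact_mod_cast hq
  have hb3 : x₃ ≤ 3*x₁*x₂/(x₁*x₂-x₁-x₂) := (Nat.le_div_iff_mul_le hN2pos).mpr hq3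
  -- level-3 numerator positive
  have hN3 : x₂*x₃+x₁*x₃+x₁*x₂ < x₁*x₂*x₃ := by
    have hpos : (0:ℚ) < 1 - 1/x₁ - 1/x₂ - 1/x₃ := by linarith
    have e1 : ((x₁:ℚ)*x₂*x₃)*(1 - 1/x₁ - 1/x₂ - 1/x₃)
        = x₁*x₂*x₃ - (x₂*x₃+x₁*x₃+x₁*x₂) := by field_simp; ring
    have := mul_pos (by positivity : (0:ℚ) < x₁*x₂*x₃) hpos
    rw [e1] at this
    have : ((x₂:ℚ)*x₃+x₁*x₃+x₁*x₂) < x₁*x₂*x₃ := by linarith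
    exact_mod_cast this
  have hN3pos : 0 < x₁*x₂*x₃ - (x₂*x₃+x₁*x₃+x₁*x₂) := Nat.sub_pos_of_lt hN3
  -- x₄ bound
  have hq4 : x₄ * (x₁*x₂*x₃ - (x₂*x₃+x₁*x₃+x₁*x₂)) ≤ 2*x₁*x₂*x₃ := by
    have h4 : 1 - 1/(x₁:ℚ) - 1/x₂ - 1/x₃ ≤ 2 * (1/x₄) := by linarith
    have := mul_le_mul_of_nonneg_left h4 (by positivity : (0:ℚ) ≤ x₁*x₂*x₃*x₄)
    have i1 : ((x₁:ℚ)*x₂*x₃*x₄)*(1 - 1/x₁ - 1/x₂ - 1/x₃)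
        = x₄*(x₁*x₂*x₃ - (x₂*x₃+x₁*x₃+x₁*x₂)) := by field_simp; ring
    have i2 : ((x₁:ℚ)*x₂*x₃*x₄)*(2*(1/x₄)) = 2*(x₁*x₂*x₃) := by
      field_simp
    have hq : (x₄:ℚ)*(x₁*x₂*x₃ - (x₂*x₃+x₁*x₃+x₁*x₂)) ≤ 2*(x₁*x₂*x₃) := by linarith
    have hc : ((x₁*x₂*x₃ - (x₂*x₃+x₁*x₃+x₁*x₂) : ℕ) : ℚ)
        = (x₁:ℚ)*x₂*x₃ - (x₂*x₃+x₁*x₃+x₁*x₂) := by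
      rw [Nat.cast_sub (le_of_lt hN3)]; push_cast; ring
    rw [← hc] at hq
    have : x₄ * (x₁*x₂*x₃ - (x₂*x₃+x₁*x₃+x₁*x₂)) ≤ 2*(x₁*x₂*x₃) := by exact_mod_cast hq
    linarith [this]
  have hb4 : x₄ ≤ 2*x₁*x₂*x₃/(x₁*x₂*x₃ - (x₂*x₃+x₁*x₃+x₁*x₂)) := by
    apply (Nat.le_div_iff_mul_le hN3pos).mpr
    calc x₄ * (x₁*x₂*x₃ - (x₂*x₃+x₁*x₃+x₁*x₂)) ≤ 2*x₁*x₂*x₃ := hq4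
      _ = 2*x₁*x₂*x₃ := rfl
  -- key equation
  have key : x₅ * (x₂*x₃*x₄ + x₁*x₃*x₄ + x₁*x₂*x₄ + x₁*x₂*x₃) + x₁*x₂*x₃*x₄
      = (x₁*x₂*x₃*x₄) * x₅ := by
    have hq : (x₅:ℚ) * (x₂*x₃*x₄ + x₁*x₃*x₄ + x₁*x₂*x₄ + x₁*x₂*x₃) + x₁*x₂*x₃*x₄
        = ((x₁:ℚ)*x₂*x₃*x₄) * x₅ := by
      have e : ((x₁:ℚ)*x₂*x₃*x₄*x₅) * (1/x₁ + 1/x₂ + 1/x₃ + 1/x₄ + 1/x₅)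
          = x₅*(x₂*x₃*x₄ + x₁*x₃*x₄ + x₁*x₂*x₄ + x₁*x₂*x₃) + x₁*x₂*x₃*x₄ := by
        field_simp
      rw [hsum, mul_one] at e
      linear_combination -e
    exact_mod_cast hq
  -- T < S
  have hTS : (x₂*x₃*x₄ + x₁*x₃*x₄ + x₁*x₂*x₄ + x₁*x₂*x₃) < x₁*x₂*x₃*x₄ := by
    have hpos : (0:ℚ) < 1 - 1/x₁ - 1/x₂ - 1/x₃ - 1/x₄ := by linarith
    have e1 : ((x₁:ℚ)*x₂*x₃*x₄)*(1 - 1/x₁ - 1/x₂ - 1/x₃ - 1/x₄)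
        = x₁*x₂*x₃*x₄ - (x₂*x₃*x₄ + x₁*x₃*x₄ + x₁*x₂*x₄ + x₁*x₂*x₃) := by
      field_simp; ring
    have := mul_pos (by positivity : (0:ℚ) < x₁*x₂*x₃*x₄) hpos
    rw [e1] at this
    have : ((x₂:ℚ)*x₃*x₄ + x₁*x₃*x₄ + x₁*x₂*x₄ + x₁*x₂*x₃) < x₁*x₂*x₃*x₄ := by linarith
    exact_mod_cast this
  -- x₅ * (S - T) = S
  have hkey2 : x₅ * (x₁*x₂*x₃*x₄ - (x₂*x₃*x₄ + x₁*x₃*x₄ + x₁*x₂*x₄ + x₁*x₂*x₃))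
      = x₁*x₂*x₃*x₄ := by
    obtain ⟨u, hu⟩ := Nat.exists_eq_add_of_le (le_of_lt hTS)
    rw [hu, Nat.add_sub_cancel_left]
    have hk := key
    rw [hu] at hk
    zify at hk ⊢
    linear_combination -hk
  have hSTpos : 0 < x₁*x₂*x₃*x₄ - (x₂*x₃*x₄ + x₁*x₃*x₄ + x₁*x₂*x₄ + x₁*x₂*x₃) :=
    Nat.sub_pos_of_lt hTS
  have hdvd : (x₁*x₂*x₃*x₄ - (x₂*x₃*x₄ + x₁*x₃*x₄ + x₁*x₂*x₄ + x₁*x₂*x₃)) ∣ x₁*x₂*x₃*x₄ :=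
    ⟨x₅, hkey2.symm.trans (Nat.mul_comm _ _)⟩
  have he : x₁*x₂*x₃*x₄/(x₁*x₂*x₃*x₄ - (x₂*x₃*x₄ + x₁*x₃*x₄ + x₁*x₂*x₄ + x₁*x₂*x₃)) = x₅ :=
    Nat.div_eq_of_eq_mul_left hSTpos hkey2.symm
  -- x₅ ≤ 1806
  have mem1 : x₁ ∈ Finset.Icc 2 5 := Finset.mem_Icc.mpr ⟨h2le, hb1⟩
  have mem2 : x₂ ∈ Finset.Icc x₁ 8 := Finset.mem_Icc.mpr ⟨h12, hb2⟩
  have mem3 : x₃ ∈ Finset.Icc x₂ (3*x₁*x₂/(x₁*x₂-x₁-x₂)) := Finset.mem_Icc.mpr ⟨h23, hb3⟩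
  have mem4 : x₄ ∈ Finset.Icc x₃ (2*x₁*x₂*x₃/(x₁*x₂*x₃ - (x₂*x₃+x₁*x₃+x₁*x₂))) :=
    Finset.mem_Icc.mpr ⟨h34, hb4⟩
  have hx5b : x₅ ≤ 1806 := by
    have := egyBound x₁ mem1 x₂ mem2 x₃ mem3 x₄ mem4 hTS hdvd
    rwa [he] at this
  -- square conditions with bounded witnesses
  have hsq' : ∀ x ∈ [x₁,x₂,x₃,x₄], ∃ k ∈ Finset.range 44,
      x₁*x₂*x₃*x₄/(x₁*x₂*x₃*x₄ - (x₂*x₃*x₄ + x₁*x₃*x₄ + x₁*x₂*x₄ + x₁*x₂*x₃)) = x*k^2 := by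
    have step : ∀ x : ℕ, 2 ≤ x → (∃ k : ℕ, x₅ = x * k ^ 2) →
        ∃ k ∈ Finset.range 44, x₅ = x*k^2 := by
      rintro x hx ⟨k, hk⟩
      refine ⟨k, Finset.mem_range.mpr ?_, hk⟩
      by_contra hbig
      push_neg at hbig
      nlinarith [hk, hx5b]
    rw [he]
    intro x hx
    simp only [List.mem_cons, List.not_mem_nil, or_false] at hx
    rcases hx with rfl | rfl | rfl | rfl
    · exact step _ h2le hsq1
    · exact step _ (le_trans h2le h12) hsq2
    · exact step _ (le_trans h2le (le_trans h12 h23)) hsq3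
    · exact step _ (le_trans h2le (le_trans h12 (le_trans h23 h34))) hsq4
  have := egyMain x₁ mem1 x₂ mem2 x₃ mem3 x₄ mem4 hTS hdvd hsq'
  rw [he] at this
  exact this
end
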